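/- Small graphs always contain an active vertex (Theorem 1(vii)): if ε ≥ 0 with ε · |V| < 1, x_i^0 ≥ 0 for every vertex i, and ∑_{i∈V} x_i^0 = 1, then for every time t there exists a vertex i with x_i^t > ε; that is, at every time step at least one vertex holds charge exceeding the threshold. -/

import Mathlib

lemma double_sum_neighbor {V : Type*} [Fintype V] [DecidableEq V]
    (G : SimpleGraph V) [DecidableRel G.Adj] (f : V → ℝ) :
    ∑ i, ∑ j ∈ G.neighborFinset i, f j = ∑ j, (G.degree j : ℝ) * f j := by
  have h : ∀ i : V, ∑ j ∈ G.neighborFinset i, f j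
      = ∑ j, if G.Adj i j then f j else 0 := by
    intro i
    rw [SimpleGraph.neighborFinset_eq_filter, Finset.sum_filter]
  simp_rw [h]
  rw [Finset.sum_comm]
  refine Finset.sum_congr rfl fun j _ => ?_
  have h2 : ∀ i : V, (if G.Adj i j then f j else 0) = (if G.Adj j i then f j else 0) := by
    intro i; simp [SimpleGraph.adj_comm]
  simp_rw [h2, ← Finset.sum_filter, Finset.sum_const,
    ← SimpleGraph.neighborFinset_eq_filter, SimpleGraph.card_neighborFinset_eq_degree,
    nsmul_eq_mul]

/-- **Small graphs always contain an active vertex (Theorem 1(vii)).** If `ε ≥ 0` with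
`ε · |V| < 1`, initial charges are nonnegative and sum to `1`, then at every time `t` some
vertex holds charge exceeding the threshold `ε`. -/
theorem exists_active_vertex
    {V : Type*} [Fintype V] [DecidableEq V]
    (G : SimpleGraph V) [DecidableRel G.Adj]
    (hdeg : ∀ i : V, 0 < G.degree i)
    (ε : ℝ) (x : ℕ → V → ℝ)
    (hupd : ∀ (t : ℕ) (i : V),
      x (t + 1) i =
        (ε + (x t i - ε) / 2) * (if ε < x t i then (1 : ℝ) else 0)
          + x t i * (1 - (if ε < x t i then (1 : ℝ) else 0))
          + (1 / 2) * ∑ j ∈ G.neighborFinset i,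
              (if ε < x t j then (1 : ℝ) else 0) * (x t j - ε) / (G.degree j))
    (hε : 0 ≤ ε) (hsmall : ε * (Fintype.card V : ℝ) < 1)
    (hnn : ∀ i : V, 0 ≤ x 0 i) (hsum : ∑ i, x 0 i = 1) :
    ∀ t : ℕ, ∃ i : V, ε < x t i := by
  have key : ∀ t : ℕ, ∑ i, x t i = 1 := by
    intro t
    induction t with
    | zero => exact hsum
    | succ t ih =>
      have hswap := double_sum_neighbor G
        (fun j => (if ε < x t j then (1 : ℝ) else 0) * (x t j - ε) / (G.degree j))
      have hd : ∀ j : V, (G.degree j : ℝ) *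
          ((if ε < x t j then (1 : ℝ) else 0) * (x t j - ε) / (G.degree j))
          = (if ε < x t j then (1 : ℝ) else 0) * (x t j - ε) := by
        intro j
        have hj : (G.degree j : ℝ) ≠ 0 := by exact_mod_cast (hdeg j).ne'
        field_simp
      calc ∑ i, x (t + 1) i
          = ∑ i, (((ε + (x t i - ε) / 2) * (if ε < x t i then (1 : ℝ) else 0)
              + x t i * (1 - (if ε < x t i then (1 : ℝ) else 0)))
              + (1 / 2) * ((if ε < x t i then (1 : ℝ) else 0) * (x t i - ε))) := by
            simp_rw [hupd t]
            simp only [Finset.sum_add_distrib]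
            congr 1
            simp only [← Finset.mul_sum]
            rw [hswap]
            congr 1
            exact Finset.sum_congr rfl fun j _ => hd j
        _ = ∑ i, x t i := by
            refine Finset.sum_congr rfl fun i _ => ?_
            by_cases h : ε < x t i <;> simp [h] <;> ring
        _ = 1 := ih
  intro t
  by_contra h
  push_neg at h
  have h1 : (1 : ℝ) ≤ ε * (Fintype.card V : ℝ) := by
    calc (1 : ℝ) = ∑ i, x t i := (key t).symm
      _ ≤ ∑ _i : V, ε := Finset.sum_le_sum fun i _ => h i
      _ = ε * (Fintype.card V : ℝ) := by
          rw [Finset.sum_const, nsmul_eq_mul, Finset.card_univ, mul_comm]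
  linarith
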